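/- Assume V, E, 𝒱, ℰ are differentiable on [0,∞) with dV/dτ = d𝒱/dτ, dE/dτ = d ℰ/dτ − (ρ/ν₀)(E−V²), E(τ) − V(τ)² ≥ 0 for all τ, V(0)=𝒱(0), E(0)=ℰ(0), ρ ≥ 0, ν₀ > 0. Then for all τ ≥ 0: V(τ) = 𝒱(τ) and E(τ) − V(τ)² ≤ ℰ(τ) − 𝒱(τ)². -/

import Mathlib

theorem stmt10 (V E 𝒱 ℰ : ℝ → ℝ) (ρ ν₀ : ℝ)
    (hρ : 0 ≤ ρ) (hν₀ : 0 < ν₀)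
    (hV : Differentiable ℝ V) (hE : Differentiable ℝ E)
    (h𝒱 : Differentiable ℝ 𝒱) (hℰ : Differentiable ℝ ℰ)
    (hVode : ∀ τ, deriv V τ = deriv 𝒱 τ)
    (hEode : ∀ τ, deriv E τ = deriv ℰ τ - (ρ / ν₀) * (E τ - (V τ) ^ 2))
    (hvar : ∀ τ, 0 ≤ E τ - (V τ) ^ 2)
    (hV0 : V 0 = 𝒱 0) (hE0 : E 0 = ℰ 0) :
    ∀ τ ≥ 0, V τ = 𝒱 τ ∧ E τ - (V τ) ^ 2 ≤ ℰ τ - (𝒱 τ) ^ 2 := by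
  have hfd : Differentiable ℝ (fun τ => V τ - 𝒱 τ) := hV.sub h𝒱
  have hf : ∀ τ, V τ - 𝒱 τ = 0 := by
    intro τ
    have hconst := is_const_of_deriv_eq_zero hfd (fun x => by
      rw [deriv_fun_sub (hV x) (h𝒱 x), hVode x, sub_self]) τ 0
    simpa [hV0] using hconst
  have hVeq : ∀ τ, V τ = 𝒱 τ := fun τ => sub_eq_zero.mp (hf τ)
  have hgd : Differentiable ℝ (fun τ => E τ - ℰ τ) := hE.sub hℰ
  have hg' : ∀ τ, deriv (fun τ => E τ - ℰ τ) τ ≤ 0 := by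
    intro τ
    rw [deriv_fun_sub (hE τ) (hℰ τ), hEode τ]
    have : 0 ≤ (ρ / ν₀) * (E τ - (V τ) ^ 2) :=
      mul_nonneg (div_nonneg hρ hν₀.le) (hvar τ)
    linarith
  have hanti : Antitone (fun τ => E τ - ℰ τ) :=
    antitone_of_deriv_nonpos hgd hg'
  intro τ hτ
  refine ⟨hVeq τ, ?_⟩
  have := hanti hτ
  simp only [hE0, sub_self] at this
  have h2 : E τ - ℰ τ ≤ 0 := by simpa [hE0] using this
  rw [hVeq τ]
  linarith
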